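/- For every S_∞-invariant normal subgroup N ⊴ ℤ₂^{*∞}, the set {p ∈ P : p is a rotation of ker(i) for some k ∈ ℕ₀ and some i ∈ ℕ^k with a_i ∈ N} is a skew category of partitions, and its associated subgroup F_∞ of ℤ₂^{*∞} equals N. -/

import Mathlib

attribute [local instance] Classical.propDecidable

noncomputable section

namespace GTQG

/-! ## Partitions -/

/-- The set `P(k,l)` of partitions of `{1,…,k,1',…,l'}`, encoded as equivalence
relations (i.e. set partitions) on the disjoint union `Fin k ⊕ Fin l`. -/
abbrev Part (k l : ℕ) : Type := Setoid (Fin k ⊕ Fin l)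

/-- `ker(i,j)`: the partition whose blocks are the fibers of the labelling
`x ↦ i x` on upper points and `y ↦ j y` on lower points. -/
def kerPartA {α : Type*} {k l : ℕ} (i : Fin k → α) (j : Fin l → α) : Part k l :=
  Setoid.ker (Sum.elim i j)

/-- `ker(i,j)` for `ℕ`-valued multi-indices. -/
abbrev kerPart {k l : ℕ} (i : Fin k → ℕ) (j : Fin l → ℕ) : Part k l := kerPartA i j

/-- `ker(i) = ker(i,∅) ∈ P(k,0)`. -/
def kerPart0 {k : ℕ} (i : Fin k → ℕ) : Part k 0 := kerPartA i Fin.elim0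

/-- The pair partition `⊔ ∈ P(0,2)`. -/
def pairPart : Part 0 2 := kerPartA Fin.elim0 (fun _ => (1 : ℕ))

/-- The identity partition `| ∈ P(1,1)`. -/
def idPart : Part 1 1 := kerPartA (fun _ => (1 : ℕ)) (fun _ => (1 : ℕ))

/-- The partition `p̂ = ker((1,1,2),(2,1,1)) ∈ P(3,3)`. -/
def pHat : Part 3 3 := kerPart ![1, 1, 2] ![2, 1, 1]

/-- The involution `p* ∈ P(l,k)`, turning `p` upside-down. -/
def invol {k l : ℕ} (p : Part k l) : Part l k := Setoid.comap Sum.swap p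

/-- The number of blocks of a partition. -/
def blockCount {k l : ℕ} (p : Part k l) : ℕ := Nat.card (Quotient p)

/-- The restriction of `p` to its upper row. -/
def upperSetoid {k l : ℕ} (p : Part k l) : Setoid (Fin k) := Setoid.comap Sum.inl p

/-- The restriction of `p` to its lower row. -/
def lowerSetoid {k l : ℕ} (p : Part k l) : Setoid (Fin l) := Setoid.comap Sum.inr p

/-- `p ∈ P(k,l)` and `q ∈ P(l,l')` are compatible if the lower row of `p`
and the upper row of `q` have the same block structure
(i.e. `j^(p) ∈ S_∞(i^(q))`). -/
def Compatible {k l l' : ℕ} (p : Part k l) (q : Part l l') : Prop :=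
  lowerSetoid p = upperSetoid q

section Comp

variable {k l l' : ℕ}

/-- The points of the vertical concatenation of `p ∈ P(k,l)` and `q ∈ P(l,l')`:
`k` upper points, `l` middle points, `l'` lower points. -/
abbrev CompCarrier (k l l' : ℕ) : Type := Fin k ⊕ (Fin l ⊕ Fin l')

/-- Inclusion of the points of `p` into the vertical concatenation. -/
def topIncl : Fin k ⊕ Fin l → CompCarrier k l l' := Sum.map id Sum.inl

/-- Inclusion of the points of `q` into the vertical concatenation. -/
def botIncl : Fin l ⊕ Fin l' → CompCarrier k l l' := Sum.inr

/-- Two points of the vertical concatenation are directly connected if they are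
connected by a string of `p` or by a string of `q`. -/
def compRel (p : Part k l) (q : Part l l') :
    CompCarrier k l l' → CompCarrier k l l' → Prop := fun x y =>
  (∃ u v, p u v ∧ x = topIncl u ∧ y = topIncl v) ∨
  (∃ u v, q u v ∧ x = botIncl u ∧ y = botIncl v)

/-- The partition of all points of the vertical concatenation of `p` and `q`
into connected components. -/
def middleJoin (p : Part k l) (q : Part l l') : Setoid (CompCarrier k l l') :=
  Relation.EqvGen.setoid (compRel p q)

/-- The composition `qp ∈ P(k,l')`: vertical concatenation with all loops removed. -/
def compPart (p : Part k l) (q : Part l l') : Part k l' :=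
  Setoid.comap (Sum.map id Sum.inr) (middleJoin p q)

/-- A point of the vertical concatenation is a middle point. -/
def IsMiddle (x : CompCarrier k l l') : Prop := ∃ m : Fin l, x = Sum.inr (Sum.inl m)

/-- The number `l(q,p)` of loops in the vertical concatenation of `p` and `q`:
connected components consisting entirely of middle points. -/
def loopCount (p : Part k l) (q : Part l l') : ℕ :=
  Nat.card {c : Quotient (middleJoin p q) //
    ∀ x : CompCarrier k l l', Quotient.mk (middleJoin p q) x = c → IsMiddle x}

end Comp

/-- The direct sum of two set partitions. -/
def sumSetoid {α β : Type*} (p : Setoid α) (q : Setoid β) : Setoid (α ⊕ β) :=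
  Setoid.ker (Sum.map (Quotient.mk p) (Quotient.mk q))

/-- The tensor product `p ⊗ q ∈ P(k+k',l+l')`: horizontal concatenation. -/
def tensorPart {k l k' l' : ℕ} (p : Part k l) (q : Part k' l') : Part (k + k') (l + l') :=
  Setoid.comap
    (Sum.elim
      (fun z => Fin.addCases (fun a => Sum.inl (Sum.inl a)) (fun b => Sum.inr (Sum.inl b)) z)
      (fun z => Fin.addCases (fun a => Sum.inl (Sum.inr a)) (fun b => Sum.inr (Sum.inr b)) z))
    (sumSetoid p q)

/-! ## Rotations -/

/-- Rotating the outermost left upper leg to the lower row (reindexing map). -/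
def rotULDmap (k l : ℕ) : Fin k ⊕ Fin (l + 1) → Fin (k + 1) ⊕ Fin l
  | .inl x => .inl x.succ
  | .inr y => Fin.cases (Sum.inl 0) (fun i => Sum.inr i) y

/-- Rotating the outermost left upper leg to the lower row. -/
def rotULD {k l : ℕ} (p : Part (k + 1) l) : Part k (l + 1) :=
  Setoid.comap (rotULDmap k l) p

/-- Rotating the outermost left lower leg to the upper row (reindexing map). -/
def rotDLUmap (k l : ℕ) : Fin (k + 1) ⊕ Fin l → Fin k ⊕ Fin (l + 1)
  | .inl x => Fin.cases (Sum.inr 0) (fun i => Sum.inl i) x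
  | .inr y => .inr y.succ

/-- Rotating the outermost left lower leg to the upper row. -/
def rotDLU {k l : ℕ} (p : Part k (l + 1)) : Part (k + 1) l :=
  Setoid.comap (rotDLUmap k l) p

/-- Rotating the outermost right upper leg to the lower row (reindexing map). -/
def rotURDmap (k l : ℕ) : Fin k ⊕ Fin (l + 1) → Fin (k + 1) ⊕ Fin l
  | .inl x => .inl x.castSucc
  | .inr y => Fin.lastCases (Sum.inl (Fin.last k)) (fun i => Sum.inr i) y

/-- Rotating the outermost right upper leg to the lower row. -/
def rotURD {k l : ℕ} (p : Part (k + 1) l) : Part k (l + 1) :=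
  Setoid.comap (rotURDmap k l) p

/-- Rotating the outermost right lower leg to the upper row (reindexing map). -/
def rotDRUmap (k l : ℕ) : Fin (k + 1) ⊕ Fin l → Fin k ⊕ Fin (l + 1)
  | .inl x => Fin.lastCases (Sum.inr (Fin.last l)) (fun i => Sum.inl i) x
  | .inr y => .inr y.castSucc

/-- Rotating the outermost right lower leg to the upper row. -/
def rotDRU {k l : ℕ} (p : Part k (l + 1)) : Part (k + 1) l :=
  Setoid.comap (rotDRUmap k l) p

/-- One basic rotation step between partitions (with varying numbers of
upper and lower points). -/
inductive BasicRot : (Σ k l : ℕ, Part k l) → (Σ k l : ℕ, Part k l) → Prop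
  | uld {k l : ℕ} (p : Part (k + 1) l) : BasicRot ⟨k + 1, l, p⟩ ⟨k, l + 1, rotULD p⟩
  | dlu {k l : ℕ} (p : Part k (l + 1)) : BasicRot ⟨k, l + 1, p⟩ ⟨k + 1, l, rotDLU p⟩
  | urd {k l : ℕ} (p : Part (k + 1) l) : BasicRot ⟨k + 1, l, p⟩ ⟨k, l + 1, rotURD p⟩
  | dru {k l : ℕ} (p : Part k (l + 1)) : BasicRot ⟨k, l + 1, p⟩ ⟨k + 1, l, rotDRU p⟩

/-- `IsRotationOf q p`: `q` is obtained from `p` by finitely many basic rotations. -/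
def IsRotationOf (q p : Σ k l : ℕ, Part k l) : Prop := Relation.ReflTransGen BasicRot p q

/-- A family `R ⊆ P` is closed under rotation. -/
def RotationClosed (R : ∀ k l : ℕ, Set (Part k l)) : Prop :=
  ∀ {k l k' l' : ℕ} (p : Part k l) (q : Part k' l'),
    p ∈ R k l → IsRotationOf ⟨k', l', q⟩ ⟨k, l, p⟩ → q ∈ R k' l'

/-! ## (Skew) categories of partitions -/

/-- A skew category of partitions: a collection `R ⊆ P` containing `⊔` and `|`,
closed under involution, connected tensor products and conditioned composition. -/
structure IsSkewCategory (R : ∀ k l : ℕ, Set (Part k l)) : Prop where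
  pair_mem : pairPart ∈ R 0 2
  id_mem : idPart ∈ R 1 1
  invol_mem : ∀ {k l : ℕ} {p : Part k l}, p ∈ R k l → invol p ∈ R l k
  conn_tensor_mem : ∀ {k l k' l' : ℕ} {p : Part k l} {q : Part k' l'}
      (i : Fin k → ℕ) (j : Fin l → ℕ) (f : Fin k' → ℕ) (g : Fin l' → ℕ),
      p ∈ R k l → q ∈ R k' l' → kerPart i j = p → kerPart f g = q →
      kerPart (Fin.append i f) (Fin.append j g) ∈ R (k + k') (l + l')
  cond_comp_mem : ∀ {k l l' : ℕ} {p : Part k l} {q : Part l l'},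
      p ∈ R k l → q ∈ R l l' → Compatible p q → compPart p q ∈ R k l'

/-- A category of partitions: a collection `C ⊆ P` containing `⊔` and `|`,
closed under involution, tensor products and composition. -/
structure IsCategoryOfPartitions (C : ∀ k l : ℕ, Set (Part k l)) : Prop where
  pair_mem : pairPart ∈ C 0 2
  id_mem : idPart ∈ C 1 1
  invol_mem : ∀ {k l : ℕ} {p : Part k l}, p ∈ C k l → invol p ∈ C l k
  tensor_mem : ∀ {k l k' l' : ℕ} {p : Part k l} {q : Part k' l'},
      p ∈ C k l → q ∈ C k' l' → tensorPart p q ∈ C (k + k') (l + l')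
  comp_mem : ∀ {k l l' : ℕ} {p : Part k l} {q : Part l l'},
      p ∈ C k l → q ∈ C l l' → compPart p q ∈ C k l'

/-- The skew category of partitions generated by a family `E`. -/
def skewGenerated (E : ∀ k l : ℕ, Set (Part k l)) : ∀ k l : ℕ, Set (Part k l) :=
  fun k l => { p | ∀ R : ∀ k l : ℕ, Set (Part k l),
    IsSkewCategory R → (∀ k' l' : ℕ, E k' l' ⊆ R k' l') → p ∈ R k l }

/-- The category of partitions generated by a family `E`. -/
def catGenerated (E : ∀ k l : ℕ, Set (Part k l)) : ∀ k l : ℕ, Set (Part k l) :=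
  fun k l => { p | ∀ C : ∀ k l : ℕ, Set (Part k l),
    IsCategoryOfPartitions C → (∀ k' l' : ℕ, E k' l' ⊆ C k' l') → p ∈ C k l }

end GTQG
namespace GTQG

/-! ## The free products `ℤ₂^{*∞}` and `ℤ₂^{*n}` -/

/-- The cyclic group of order two (written multiplicatively). -/
abbrev Z2 : Type := Multiplicative (ZMod 2)

/-- `ℤ₂^{*∞}`, the free product of countably many copies of `ℤ₂`. -/
abbrev FreeZ2 : Type := Monoid.CoprodI (fun _ : ℕ => Z2)

/-- `ℤ₂^{*n}`, the free product of `n` copies of `ℤ₂`. -/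
abbrev FreeZ2n (n : ℕ) : Type := Monoid.CoprodI (fun _ : Fin n => Z2)

/-- The generator `a_i` of `ℤ₂^{*∞}`. -/
def gen (i : ℕ) : FreeZ2 := Monoid.CoprodI.of (i := i) (Multiplicative.ofAdd (1 : ZMod 2))

/-- The generator `a_i` of `ℤ₂^{*n}`. -/
def genn {n : ℕ} (i : Fin n) : FreeZ2n n :=
  Monoid.CoprodI.of (i := i) (Multiplicative.ofAdd (1 : ZMod 2))

/-- The word `a_i = a_{i₁} ⋯ a_{i_k} ∈ ℤ₂^{*∞}` associated to a multi-index. -/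
def aWord {k : ℕ} (i : Fin k → ℕ) : FreeZ2 := (List.ofFn fun x => gen (i x)).prod

/-- The word `a_i = a_{i₁} ⋯ a_{i_k} ∈ ℤ₂^{*n}` associated to a multi-index. -/
def aWordn {n k : ℕ} (i : Fin k → Fin n) : FreeZ2n n := (List.ofFn fun x => genn (i x)).prod

/-- The natural embedding `ℤ₂^{*n} → ℤ₂^{*∞}`. -/
def incl (n : ℕ) : FreeZ2n n →* FreeZ2 :=
  Monoid.CoprodI.lift (fun i => Monoid.CoprodI.of (M := fun _ : ℕ => Z2) (i := (i : ℕ)))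

/-- The endomorphism of `ℤ₂^{*∞}` induced by a map `σ : ℕ → ℕ`, `a_i ↦ a_{σ i}`.
For bijective `σ` this is the action of `S_∞`, in general that of `sS_∞`. -/
def permEndo (σ : ℕ → ℕ) : FreeZ2 →* FreeZ2 :=
  Monoid.CoprodI.lift (fun i => Monoid.CoprodI.of (M := fun _ : ℕ => Z2) (i := σ i))

/-- The endomorphism of `ℤ₂^{*n}` induced by a map `σ : Fin n → Fin n`. -/
def permEndon {n : ℕ} (σ : Fin n → Fin n) : FreeZ2n n →* FreeZ2n n :=
  Monoid.CoprodI.lift (fun i => Monoid.CoprodI.of (M := fun _ : Fin n => Z2) (i := σ i))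

/-- A map `ℕ → ℕ` is finitely supported (moves only finitely many points). -/
def FinitelySupported (σ : ℕ → ℕ) : Prop := {x | σ x ≠ x}.Finite

/-- `F_∞(D) = S_∞({a_{ind(p)} : p ∈ D(k,0)})`, the set of all words `a_i` with
`ker(i) ∈ D(k,0)` (the `S_∞`-orbit of the words of minimal-index labellings). -/
def Finfty (D : ∀ k l : ℕ, Set (Part k l)) : Set FreeZ2 :=
  { g | ∃ (k : ℕ) (i : Fin k → ℕ), kerPart0 i ∈ D k 0 ∧ g = aWord i }

end GTQG
namespace GTQG

/-! ## The maps `T̂_p` and `T_p` -/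

/-- `(ℂ^n)^{⊗k}`, realised as functions on multi-indices (the standard basis
`e_{i₁} ⊗ ⋯ ⊗ e_{i_k}` is indexed by multi-indices `i ∈ {1,…,n}^k`). -/
abbrev MV (n k : ℕ) : Type := (Fin k → Fin n) → ℂ

/-- `δ̂_p(i,j) = 1` iff `(i,j) ∈ S_∞(ind(p))`, i.e. iff `ker(i,j) = p`. -/
def hatDelta {k l : ℕ} (p : Part k l) {n : ℕ} (i : Fin k → Fin n) (j : Fin l → Fin n) : ℂ :=
  if kerPartA i j = p then 1 else 0

/-- `δ_p(i,j) = 1` iff `(i,j) ∈ sS_∞(ind(p))`, i.e. iff the labelling `(i,j)`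
is constant on the blocks of `p`. -/
def softDelta {k l : ℕ} (p : Part k l) {n : ℕ} (i : Fin k → Fin n) (j : Fin l → Fin n) : ℂ :=
  if p ≤ kerPartA i j then 1 else 0

/-- The linear map `T̂_p^(n) : (ℂ^n)^{⊗k} → (ℂ^n)^{⊗l}`. -/
def hatT (n : ℕ) {k l : ℕ} (p : Part k l) : MV n k →ₗ[ℂ] MV n l :=
  Matrix.mulVecLin (Matrix.of fun (j : Fin l → Fin n) (i : Fin k → Fin n) => hatDelta p i j)

/-- The linear map `T_p^(n) : (ℂ^n)^{⊗k} → (ℂ^n)^{⊗l}` of Banica–Speicher. -/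
def softT (n : ℕ) {k l : ℕ} (p : Part k l) : MV n k →ₗ[ℂ] MV n l :=
  Matrix.mulVecLin (Matrix.of fun (j : Fin l → Fin n) (i : Fin k → Fin n) => softDelta p i j)

/-- The tensor product of linear maps, under the identification
`(ℂ^n)^{⊗k} ⊗ (ℂ^n)^{⊗k'} ≅ (ℂ^n)^{⊗(k+k')}` of basis vectors
`(e_{i} ⊗ e_{f} ↦ e_{if}`, concatenation of multi-indices). -/
def tensorMap {n k l k' l' : ℕ} (S : MV n k →ₗ[ℂ] MV n l) (T : MV n k' →ₗ[ℂ] MV n l') :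
    MV n (k + k') →ₗ[ℂ] MV n (l + l') :=
  Matrix.mulVecLin (Matrix.of fun (x : Fin (l + l') → Fin n) (y : Fin (k + k') → Fin n) =>
    LinearMap.toMatrix' S (fun a => x (Fin.castAdd l' a)) (fun a => y (Fin.castAdd k' a)) *
    LinearMap.toMatrix' T (fun b => x (Fin.natAdd l b)) (fun b => y (Fin.natAdd k b)))

/-- The adjoint of a linear map `(ℂ^n)^{⊗k} → (ℂ^n)^{⊗l}` with respect to the
standard Hermitian inner products (conjugate-transpose of the matrix in the
standard bases). -/
def adjointMap {n k l : ℕ} (S : MV n k →ₗ[ℂ] MV n l) : MV n l →ₗ[ℂ] MV n k :=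
  Matrix.mulVecLin (LinearMap.toMatrix' S).conjTranspose

/-- The map `ζ : ℂ → (ℂ^n)^{⊗2}`, `1 ↦ Σᵢ eᵢ ⊗ eᵢ`. -/
def zetaMap (n : ℕ) : MV n 0 →ₗ[ℂ] MV n 2 :=
  Matrix.mulVecLin (Matrix.of fun (j : Fin 2 → Fin n) (_ : Fin 0 → Fin n) =>
    if j 0 = j 1 then (1 : ℂ) else 0)

/-- A tensor category with duals (of subspaces of `Hom((ℂ^n)^{⊗k}, (ℂ^n)^{⊗l})`). -/
structure IsTensorCategoryWithDuals (n : ℕ)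
    (H : ∀ k l : ℕ, Submodule ℂ (MV n k →ₗ[ℂ] MV n l)) : Prop where
  tensor_mem : ∀ {k l k' l' : ℕ} (S : MV n k →ₗ[ℂ] MV n l) (T : MV n k' →ₗ[ℂ] MV n l'),
      S ∈ H k l → T ∈ H k' l' → tensorMap S T ∈ H (k + k') (l + l')
  comp_mem : ∀ {k l l' : ℕ} (S : MV n k →ₗ[ℂ] MV n l) (T : MV n l →ₗ[ℂ] MV n l'),
      S ∈ H k l → T ∈ H l l' → T ∘ₗ S ∈ H k l'
  adjoint_mem : ∀ {k l : ℕ} (S : MV n k →ₗ[ℂ] MV n l), S ∈ H k l → adjointMap S ∈ H l k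
  id_mem : LinearMap.id ∈ H 1 1
  zeta_mem : zetaMap n ∈ H 0 2

/-- The collection of subspaces `span{T̂_p^(n) : p ∈ R(k,l)}`. -/
def spanOf (n : ℕ) (R : ∀ k l : ℕ, Set (Part k l)) :
    ∀ k l : ℕ, Submodule ℂ (MV n k →ₗ[ℂ] MV n l) :=
  fun k l => Submodule.span ℂ {T | ∃ p ∈ R k l, T = hatT n p}

/-- All connected tensor products of `p` and `q`. -/
def connTensorSet {k l k' l' : ℕ} (p : Part k l) (q : Part k' l') :
    Set (Part (k + k') (l + l')) :=
  { r | ∃ (i : Fin k → ℕ) (j : Fin l → ℕ) (f : Fin k' → ℕ) (g : Fin l' → ℕ),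
      kerPart i j = p ∧ kerPart f g = q ∧ r = kerPart (Fin.append i f) (Fin.append j g) }

/-- All connected conditioned compositions of `p` and `q`. -/
def connCompSet {k l l' : ℕ} (p : Part k l) (q : Part l l') : Set (Part k l') :=
  { r | ∃ (i : Fin k → ℕ) (h : Fin l → ℕ) (g : Fin l' → ℕ),
      kerPart i h = p ∧ kerPart h g = q ∧ r = kerPart i g }

end GTQG
namespace GTQG

/-- The set of all partitions that are rotations of some `ker(i)` with `a_i ∈ N`. -/
def rotSetOf (N : Set FreeZ2) : ∀ k l : ℕ, Set (Part k l) := fun k l =>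
  { p | ∃ (k' : ℕ) (i : Fin k' → ℕ), aWord i ∈ N ∧
      IsRotationOf ⟨k, l, p⟩ ⟨k', 0, kerPart0 i⟩ }


/-! ## Auxiliary lemmas -/

section Aux

lemma comap_ker {α β γ : Type*} (f : α → β) (g : β → γ) :
    Setoid.comap f (Setoid.ker g) = Setoid.ker (g ∘ f) :=
  Setoid.ext fun _ _ => Iff.rfl

lemma ker_congr {α β : Type*} {f g : α → β} (h : f = g) : Setoid.ker f = Setoid.ker g := by
  rw [h]

lemma rotULD_ker {k l : ℕ} (i : Fin (k+1) → ℕ) (j : Fin l → ℕ) :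
    rotULD (kerPart i j) = kerPart (Fin.tail i) (Fin.cons (i 0) j) := by
  unfold rotULD kerPart kerPartA
  rw [comap_ker]
  apply ker_congr
  funext x
  cases x with
  | inl a => rfl
  | inr b =>
    induction b using Fin.cases with
    | zero => rfl
    | succ m => rfl

lemma rotDLU_ker {k l : ℕ} (i : Fin k → ℕ) (j : Fin (l+1) → ℕ) :
    rotDLU (kerPart i j) = kerPart (Fin.cons (j 0) i) (Fin.tail j) := by
  unfold rotDLU kerPart kerPartA
  rw [comap_ker]
  apply ker_congr
  funext x
  cases x with
  | inl a =>
    induction a using Fin.cases with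
    | zero => rfl
    | succ m => rfl
  | inr b => rfl

lemma rotURD_ker {k l : ℕ} (i : Fin (k+1) → ℕ) (j : Fin l → ℕ) :
    rotURD (kerPart i j) = kerPart (i ∘ Fin.castSucc) (Fin.snoc j (i (Fin.last k))) := by
  unfold rotURD kerPart kerPartA
  rw [comap_ker]
  apply ker_congr
  funext x
  cases x with
  | inl a => rfl
  | inr b =>
    induction b using Fin.lastCases with
    | last => simp [rotURDmap, Fin.snoc_last]
    | cast m => simp [rotURDmap, Fin.snoc_castSucc]

lemma rotDRU_ker {k l : ℕ} (i : Fin k → ℕ) (j : Fin (l+1) → ℕ) :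
    rotDRU (kerPart i j) = kerPart (Fin.snoc i (j (Fin.last l))) (j ∘ Fin.castSucc) := by
  unfold rotDRU kerPart kerPartA
  rw [comap_ker]
  apply ker_congr
  funext x
  cases x with
  | inl a =>
    induction a using Fin.lastCases with
    | last => simp [rotDRUmap, Fin.snoc_last]
    | cast m => simp [rotDRUmap, Fin.snoc_castSucc]
  | inr b => rfl

lemma invol_ker {k l : ℕ} (i : Fin k → ℕ) (j : Fin l → ℕ) :
    invol (kerPart i j) = kerPart j i := by
  unfold invol kerPart kerPartA
  rw [comap_ker]
  apply ker_congr
  funext x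
  cases x <;> rfl

lemma kerPart_zero {k : ℕ} (i : Fin k → ℕ) (j : Fin 0 → ℕ) : kerPart i j = kerPart0 i := by
  unfold kerPart0 kerPart kerPartA
  apply ker_congr
  funext x
  cases x with
  | inl a => rfl
  | inr b => exact b.elim0

lemma lowerSetoid_ker {k l : ℕ} (i : Fin k → ℕ) (j : Fin l → ℕ) :
    lowerSetoid (kerPart i j) = Setoid.ker j := by
  unfold lowerSetoid kerPart kerPartA
  rw [comap_ker]
  apply ker_congr
  rfl

lemma upperSetoid_ker {k l : ℕ} (i : Fin k → ℕ) (j : Fin l → ℕ) :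
    upperSetoid (kerPart i j) = Setoid.ker i := by
  unfold upperSetoid kerPart kerPartA
  rw [comap_ker]
  apply ker_congr
  rfl


lemma gen_sq (i : ℕ) : gen i * gen i = 1 := by
  rw [gen, ← MonoidHom.map_mul]
  have : (Multiplicative.ofAdd (1 : ZMod 2)) * (Multiplicative.ofAdd (1 : ZMod 2)) = 1 := by
    decide
  rw [this, MonoidHom.map_one]

lemma gen_inv (i : ℕ) : (gen i)⁻¹ = gen i :=
  inv_eq_of_mul_eq_one_right (gen_sq i)

lemma gen_mul_gen_cancel (i : ℕ) (x : FreeZ2) : gen i * (gen i * x) = x := by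
  rw [← mul_assoc, gen_sq, one_mul]

lemma aWord_zero (i : Fin 0 → ℕ) : aWord i = 1 := by simp [aWord]

lemma aWord_cons {k : ℕ} (c : ℕ) (i : Fin k → ℕ) :
    aWord (Fin.cons c i) = gen c * aWord i := by
  simp [aWord, List.ofFn_succ, Fin.cons_succ]

lemma aWord_snoc {k : ℕ} (i : Fin k → ℕ) (c : ℕ) :
    aWord (Fin.snoc i c) = aWord i * gen c := by
  rw [aWord, List.ofFn_succ', List.concat_eq_append, List.prod_append]
  simp [aWord, Fin.snoc_castSucc]

lemma aWord_tail {k : ℕ} (i : Fin (k+1) → ℕ) :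
    aWord i = gen (i 0) * aWord (Fin.tail i) := by
  conv_lhs => rw [← Fin.cons_self_tail i]
  rw [aWord_cons]

lemma aWord_init {k : ℕ} (i : Fin (k+1) → ℕ) :
    aWord i = aWord (Fin.init i) * gen (i (Fin.last k)) := by
  conv_lhs => rw [← Fin.snoc_init_self i]
  rw [aWord_snoc]

lemma aWord_append {k k' : ℕ} (i : Fin k → ℕ) (f : Fin k' → ℕ) :
    aWord (Fin.append i f) = aWord i * aWord f := by
  unfold aWord
  rw [List.ofFn_add, List.prod_append]
  congr 1 <;>
    · refine congrArg List.prod ?_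
      rw [List.ofFn_inj]
      funext x
      simp [Fin.append_left, Fin.append_right]

lemma permEndo_gen (σ : ℕ → ℕ) (i : ℕ) : permEndo σ (gen i) = gen (σ i) := by
  simp [permEndo, gen, Monoid.CoprodI.lift_of]

lemma permEndo_aWord (σ : ℕ → ℕ) {k : ℕ} (i : Fin k → ℕ) :
    permEndo σ (aWord i) = aWord (σ ∘ i) := by
  unfold aWord
  rw [MonoidHom.map_list_prod]
  rw [List.map_ofFn]
  congr 1

lemma fs_one : FinitelySupported ⇑(1 : Equiv.Perm ℕ) := by
  simp [FinitelySupported]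

lemma fs_mul {σ τ : Equiv.Perm ℕ} (hσ : FinitelySupported ⇑σ) (hτ : FinitelySupported ⇑τ) :
    FinitelySupported ⇑(σ * τ) := by
  refine Set.Finite.subset (hτ.union (hσ.preimage (τ.injective.injOn))) ?_
  intro x hx
  by_cases h : τ x = x
  · right
    simp only [Set.mem_preimage, Set.mem_setOf_eq, h]
    simpa [Equiv.Perm.mul_apply, h] using hx
  · exact Or.inl h

lemma fs_swap (a b : ℕ) : FinitelySupported ⇑(Equiv.swap a b) := by
  refine Set.Finite.subset ((Set.finite_singleton b).insert a) ?_
  intro x hx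
  simp only [Set.mem_setOf_eq] at hx
  by_contra h
  simp only [Set.mem_insert_iff, Set.mem_singleton_iff, not_or] at h
  exact hx (Equiv.swap_apply_of_ne_of_ne h.1 h.2)

/-- Every injection on a finite subset of ℕ extends to a finitely supported permutation. -/
lemma exists_perm_extend (E : Finset ℕ) (ψ : ℕ → ℕ) (hinj : Set.InjOn ψ E) :
    ∃ σ : Equiv.Perm ℕ, FinitelySupported ⇑σ ∧ ∀ x ∈ E, σ x = ψ x := by
  classical
  induction E using Finset.induction_on with
  | empty => exact ⟨1, fs_one, by simp⟩
  | @insert a s ha ih =>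
    obtain ⟨σ', hσ', hext⟩ := ih (hinj.mono (by simp [Finset.coe_insert, Set.subset_insert]))
    refine ⟨Equiv.swap (σ' a) (ψ a) * σ', fs_mul (fs_swap _ _) hσ', ?_⟩
    intro x hx
    rcases Finset.mem_insert.mp hx with rfl | hxs
    · simp [Equiv.swap_apply_left]
    · have h1 : σ' x = ψ x := hext x hxs
      have hax : x ≠ a := fun h => ha (h ▸ hxs)
      have h2 : ψ x ≠ ψ a := fun h =>
        hax (hinj (by simp [hxs]) (by simp) h)
      have h3 : ψ x ≠ σ' a := by
        intro h
        have := σ'.injective (h1.trans h)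
        exact hax this
      simp [Equiv.Perm.mul_apply, h1, Equiv.swap_apply_of_ne_of_ne h3 h2]

lemma ker_iff {α : Type*} {f f' : α → ℕ} (hker : Setoid.ker f = Setoid.ker f') :
    ∀ a b, f a = f b ↔ f' a = f' b := by
  intro a b
  rw [← Setoid.ker_def (f := f), ← Setoid.ker_def (f := f'), hker]

lemma ker_comp_inj {α : Type*} (σ : ℕ → ℕ) (hσ : Function.Injective σ) (f : α → ℕ) :
    Setoid.ker (σ ∘ f) = Setoid.ker f :=
  Setoid.ext fun a b => ⟨fun h => hσ h, fun h => congrArg σ h⟩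

lemma relabel_ext {α : Type*} [Fintype α] (f f' : α → ℕ) (hker : Setoid.ker f = Setoid.ker f')
    (D B : Finset ℕ) :
    ∃ σ : Equiv.Perm ℕ, FinitelySupported ⇑σ ∧ (∀ a, σ (f a) = f' a) ∧
      ∀ x ∈ D, (∀ a, f a ≠ x) → σ x ∉ B := by
  classical
  have hk := ker_iff hker
  set M : ℕ := (B ∪ Finset.image f' Finset.univ).sup id + 1 with hM
  have hB : ∀ y ∈ B, y < M := by
    intro y hy
    have : id y ≤ (B ∪ Finset.image f' Finset.univ).sup id :=
      Finset.le_sup (Finset.mem_union_left _ hy)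
    simp only [id] at this
    omega
  have hf' : ∀ a, f' a < M := by
    intro a
    have : id (f' a) ≤ (B ∪ Finset.image f' Finset.univ).sup id :=
      Finset.le_sup (Finset.mem_union_right _ (Finset.mem_image_of_mem f' (Finset.mem_univ a)))
    simp only [id] at this
    omega
  set ψ : ℕ → ℕ := fun x => if hx : ∃ a, f a = x then f' hx.choose else x + M with hψ
  have hψf : ∀ a, ψ (f a) = f' a := by
    intro a
    have hx : ∃ b, f b = f a := ⟨a, rfl⟩
    simp only [hψ, dif_pos hx]
    exact (hk _ _).mp hx.choose_spec
  have hψn : ∀ x, (∀ a, f a ≠ x) → ψ x = x + M := by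
    intro x hx
    have : ¬ ∃ a, f a = x := by push_neg; exact hx
    simp only [hψ, dif_neg this]
  set E : Finset ℕ := Finset.image f Finset.univ ∪ D with hE
  have hinj : Set.InjOn ψ E := by
    intro x₁ h₁ x₂ h₂ heq
    by_cases e₁ : ∃ a, f a = x₁ <;> by_cases e₂ : ∃ a, f a = x₂
    · obtain ⟨a, rfl⟩ := e₁
      obtain ⟨b, rfl⟩ := e₂
      rw [hψf, hψf] at heq
      exact (hk a b).mpr heq
    · obtain ⟨a, rfl⟩ := e₁
      rw [hψf] at heq
      rw [hψn x₂ (by push_neg at e₂; exact e₂)] at heq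
      have := hf' a
      omega
    · obtain ⟨b, rfl⟩ := e₂
      rw [hψf] at heq
      rw [hψn x₁ (by push_neg at e₁; exact e₁)] at heq
      have := hf' b
      omega
    · rw [hψn x₁ (by push_neg at e₁; exact e₁),
        hψn x₂ (by push_neg at e₂; exact e₂)] at heq
      omega
  obtain ⟨σ, hfs, hσ⟩ := exists_perm_extend E ψ hinj
  refine ⟨σ, hfs, fun a => ?_, fun x hx hfx => ?_⟩
  · rw [hσ (f a) (Finset.mem_union_left _ (Finset.mem_image_of_mem f (Finset.mem_univ a)))]
    exact hψf a
  · rw [hσ x (Finset.mem_union_right _ hx), hψn x hfx]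
    intro hmem
    have := hB _ hmem
    omega


/-! ## Word characterization of `rotSetOf` -/

lemma step_preserve (N : Subgroup FreeZ2) (hnorm : N.Normal)
    {s t : Σ k l : ℕ, Part k l} (h : BasicRot s t)
    (hs : ∃ i : Fin s.1 → ℕ, ∃ j : Fin s.2.1 → ℕ,
      kerPart i j = s.2.2 ∧ aWord i * (aWord j)⁻¹ ∈ N) :
    ∃ i : Fin t.1 → ℕ, ∃ j : Fin t.2.1 → ℕ,
      kerPart i j = t.2.2 ∧ aWord i * (aWord j)⁻¹ ∈ N := by
  cases h with
  | uld p =>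
    obtain ⟨i, j, hker, hw⟩ := hs
    refine ⟨Fin.tail i, Fin.cons (i 0) j, by dsimp only at hker ⊢; rw [← hker, rotULD_ker], ?_⟩
    have heq : aWord (Fin.tail i) * (aWord (Fin.cons (i 0) j))⁻¹
        = gen (i 0) * (aWord i * (aWord j)⁻¹) * (gen (i 0))⁻¹ := by
      rw [aWord_cons, aWord_tail i, mul_inv_rev, gen_inv]
      simp only [mul_assoc, gen_sq, gen_mul_gen_cancel, mul_one, one_mul]
    rw [heq]
    exact hnorm.conj_mem _ hw _
  | dlu p =>
    obtain ⟨i, j, hker, hw⟩ := hs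
    refine ⟨Fin.cons (j 0) i, Fin.tail j, by dsimp only at hker ⊢; rw [← hker, rotDLU_ker], ?_⟩
    have heq : aWord (Fin.cons (j 0) i) * (aWord (Fin.tail j))⁻¹
        = gen (j 0) * (aWord i * (aWord j)⁻¹) * (gen (j 0))⁻¹ := by
      rw [aWord_cons, aWord_tail j, mul_inv_rev, gen_inv]
      simp only [mul_assoc, gen_sq, gen_mul_gen_cancel, mul_one, one_mul]
    rw [heq]
    exact hnorm.conj_mem _ hw _
  | urd p =>
    obtain ⟨i, j, hker, hw⟩ := hs
    refine ⟨i ∘ Fin.castSucc, Fin.snoc j (i (Fin.last _)), by dsimp only at hker ⊢; rw [← hker, rotURD_ker], ?_⟩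
    have hii : i ∘ Fin.castSucc = Fin.init i := rfl
    have heq : aWord (i ∘ Fin.castSucc) * (aWord (Fin.snoc j (i (Fin.last _))))⁻¹
        = aWord i * (aWord j)⁻¹ := by
      rw [hii, aWord_snoc, aWord_init i, mul_inv_rev, gen_inv]
      simp only [mul_assoc, gen_sq, gen_mul_gen_cancel, mul_one, one_mul]
    rw [heq]
    exact hw
  | dru p =>
    obtain ⟨i, j, hker, hw⟩ := hs
    refine ⟨Fin.snoc i (j (Fin.last _)), j ∘ Fin.castSucc, by dsimp only at hker ⊢; rw [← hker, rotDRU_ker], ?_⟩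
    have hjj : j ∘ Fin.castSucc = Fin.init j := rfl
    have heq : aWord (Fin.snoc i (j (Fin.last _))) * (aWord (j ∘ Fin.castSucc))⁻¹
        = aWord i * (aWord j)⁻¹ := by
      rw [hjj, aWord_snoc, aWord_init j, mul_inv_rev, gen_inv]
      simp only [mul_assoc, gen_sq, gen_mul_gen_cancel, mul_one, one_mul]
    rw [heq]
    exact hw

lemma word_of_mem (N : Subgroup FreeZ2) (hnorm : N.Normal) {k l : ℕ} {p : Part k l}
    (hp : p ∈ rotSetOf (N : Set FreeZ2) k l) :
    ∃ i : Fin k → ℕ, ∃ j : Fin l → ℕ, kerPart i j = p ∧ aWord i * (aWord j)⁻¹ ∈ N := by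
  obtain ⟨k', i₀, hiN, hrot⟩ := hp
  have key : ∀ t : Σ k l : ℕ, Part k l,
      Relation.ReflTransGen BasicRot ⟨k', 0, kerPart0 i₀⟩ t →
      ∃ i : Fin t.1 → ℕ, ∃ j : Fin t.2.1 → ℕ,
        kerPart i j = t.2.2 ∧ aWord i * (aWord j)⁻¹ ∈ N := by
    intro t ht
    induction ht with
    | refl =>
      exact ⟨i₀, Fin.elim0, kerPart_zero i₀ _, by simpa [aWord_zero] using hiN⟩
    | tail hab hbc ih => exact step_preserve N hnorm hbc ih
  exact key ⟨k, l, p⟩ hrot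

lemma rot_to_top : ∀ (l k : ℕ) (i : Fin k → ℕ) (j : Fin l → ℕ),
    ∃ (m : ℕ) (w : Fin m → ℕ), aWord w = aWord i * (aWord j)⁻¹ ∧
      Relation.ReflTransGen BasicRot ⟨m, 0, kerPart0 w⟩ ⟨k, l, kerPart i j⟩ := by
  intro l
  induction l with
  | zero =>
    intro k i j
    refine ⟨k, i, by simp [aWord_zero], ?_⟩
    rw [kerPart_zero i j]
  | succ l ih =>
    intro k i j
    obtain ⟨m, w, hw, hrot⟩ := ih (k+1) (Fin.snoc i (j (Fin.last l))) (Fin.init j)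
    refine ⟨m, w, ?_, ?_⟩
    · rw [hw, aWord_snoc]
      conv_rhs => rw [aWord_init j]
      rw [mul_inv_rev, gen_inv]
      simp only [mul_assoc, gen_sq, gen_mul_gen_cancel, mul_one, one_mul]
    · refine hrot.tail ?_
      have hb := BasicRot.urd (kerPart (Fin.snoc i (j (Fin.last l))) (Fin.init j))
      rw [rotURD_ker] at hb
      have h1 : (Fin.snoc i (j (Fin.last l)) : Fin (k+1) → ℕ) ∘ Fin.castSucc = i := by
        funext x
        simp [Fin.snoc_castSucc]
      have h2 : Fin.snoc (Fin.init j)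
          ((Fin.snoc i (j (Fin.last l)) : Fin (k+1) → ℕ) (Fin.last k)) = j := by
        rw [Fin.snoc_last, Fin.snoc_init_self]
      rw [h1, h2] at hb
      exact hb

lemma mem_of_word (N : Subgroup FreeZ2) {k l : ℕ} (i : Fin k → ℕ) (j : Fin l → ℕ)
    (hw : aWord i * (aWord j)⁻¹ ∈ N) :
    kerPart i j ∈ rotSetOf (N : Set FreeZ2) k l := by
  obtain ⟨m, w, hweq, hrot⟩ := rot_to_top l k i j
  exact ⟨m, w, by rw [hweq]; exact SetLike.mem_coe.mpr hw, hrot⟩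

lemma word_of_mem_all (N : Subgroup FreeZ2) (hnorm : N.Normal)
    (hinv : ∀ σ : Equiv.Perm ℕ, FinitelySupported ⇑σ →
      permEndo ⇑σ '' (N : Set FreeZ2) = (N : Set FreeZ2))
    {k l : ℕ} {p : Part k l} (hp : p ∈ rotSetOf (N : Set FreeZ2) k l)
    (i : Fin k → ℕ) (j : Fin l → ℕ) (hker : kerPart i j = p) :
    aWord i * (aWord j)⁻¹ ∈ N := by
  obtain ⟨i₀, j₀, hker₀, hw₀⟩ := word_of_mem N hnorm hp
  have hk : Setoid.ker (Sum.elim i₀ j₀) = Setoid.ker (Sum.elim i j) := by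
    rw [← hker] at hker₀
    exact hker₀
  obtain ⟨σ, hfs, hext, -⟩ := relabel_ext (Sum.elim i₀ j₀) (Sum.elim i j) hk ∅ ∅
  have hi : ⇑σ ∘ i₀ = i := funext fun a => hext (Sum.inl a)
  have hj : ⇑σ ∘ j₀ = j := funext fun b => hext (Sum.inr b)
  have hmap : permEndo ⇑σ (aWord i₀ * (aWord j₀)⁻¹) = aWord i * (aWord j)⁻¹ := by
    rw [map_mul, map_inv, permEndo_aWord, permEndo_aWord, hi, hj]
  rw [← hmap]
  have himg := hinv σ hfs
  have hm : permEndo ⇑σ (aWord i₀ * (aWord j₀)⁻¹) ∈ permEndo ⇑σ '' (N : Set FreeZ2) :=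
    Set.mem_image_of_mem _ (SetLike.mem_coe.mpr hw₀)
  rw [himg] at hm
  exact hm

/-! ## Composition of compatible kernels -/

lemma compPart_ker {k l l' : ℕ} (i : Fin k → ℕ) (h : Fin l → ℕ) (g : Fin l' → ℕ)
    (hsub : ∀ a b, i a = g b → ∃ m, h m = i a) :
    compPart (kerPart i h) (kerPart h g) = kerPart i g := by
  apply Setoid.ext
  intro x y
  show Relation.EqvGen (compRel (kerPart i h) (kerPart h g))
      (Sum.map id Sum.inr x) (Sum.map id Sum.inr y) ↔ Sum.elim i g x = Sum.elim i g y
  set L : CompCarrier k l l' → ℕ := Sum.elim i (Sum.elim h g) with hL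
  have hLtop : ∀ u, L (topIncl u) = Sum.elim i h u := by
    intro u
    cases u <;> rfl
  have hLbot : ∀ u, L (botIncl u) = Sum.elim h g u := by
    intro u
    cases u <;> rfl
  have hLemb : ∀ x : Fin k ⊕ Fin l', L (Sum.map id Sum.inr x) = Sum.elim i g x := by
    intro x
    cases x <;> rfl
  constructor
  · intro hxy
    have key : ∀ u v, Relation.EqvGen (compRel (kerPart i h) (kerPart h g)) u v →
        L u = L v := by
      intro u v huv
      induction huv with
      | rel u v huv =>
        rcases huv with ⟨u', v', hpe, rfl, rfl⟩ | ⟨u', v', hqe, rfl, rfl⟩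
        · rw [hLtop, hLtop]
          exact hpe
        · rw [hLbot, hLbot]
          exact hqe
      | refl => rfl
      | symm _ _ _ ih => exact ih.symm
      | trans _ _ _ _ _ ih₁ ih₂ => exact ih₁.trans ih₂
    have := key _ _ hxy
    rwa [hLemb, hLemb] at this
  · intro hxy
    cases x with
    | inl a =>
      cases y with
      | inl b =>
        refine Relation.EqvGen.rel _ _ (Or.inl ⟨Sum.inl a, Sum.inl b, ?_, rfl, rfl⟩)
        exact hxy
      | inr b =>
        obtain ⟨m, hm⟩ := hsub a b hxy
        refine Relation.EqvGen.trans _ (Sum.inr (Sum.inl m)) _ ?_ ?_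
        · refine Relation.EqvGen.rel _ _ (Or.inl ⟨Sum.inl a, Sum.inr m, ?_, rfl, rfl⟩)
          exact hm.symm
        · refine Relation.EqvGen.rel _ _ (Or.inr ⟨Sum.inl m, Sum.inr b, ?_, rfl, rfl⟩)
          show h m = g b
          rw [hm]
          exact hxy
    | inr a =>
      cases y with
      | inl b =>
        obtain ⟨m, hm⟩ := hsub b a hxy.symm
        refine Relation.EqvGen.trans _ (Sum.inr (Sum.inl m)) _ ?_ ?_
        · refine Relation.EqvGen.rel _ _ (Or.inr ⟨Sum.inr a, Sum.inl m, ?_, rfl, rfl⟩)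
          show g a = h m
          rw [hm]
          exact hxy
        · refine Relation.EqvGen.rel _ _ (Or.inl ⟨Sum.inr m, Sum.inl b, ?_, rfl, rfl⟩)
          exact hm
      | inr b =>
        refine Relation.EqvGen.rel _ _ (Or.inr ⟨Sum.inr a, Sum.inr b, ?_, rfl, rfl⟩)
        exact hxy


lemma exists_aWord (x : FreeZ2) : ∃ (k : ℕ) (i : Fin k → ℕ), aWord i = x := by
  induction x using Monoid.CoprodI.induction_on with
  | one => exact ⟨0, Fin.elim0, aWord_zero _⟩
  | of n m =>
    have hm : ∀ m : Z2, m = 1 ∨ m = Multiplicative.ofAdd (1 : ZMod 2) := by decide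
    rcases hm m with rfl | rfl
    · exact ⟨0, Fin.elim0, by rw [aWord_zero, MonoidHom.map_one]⟩
    · refine ⟨1, fun _ => n, ?_⟩
      rw [show (fun _ => n : Fin 1 → ℕ) = Fin.cons n Fin.elim0 from ?_, aWord_cons,
        aWord_zero, mul_one]
      · rfl
      · funext z
        induction z using Fin.cases with
        | zero => rfl
        | succ m => exact m.elim0
  | mul x y hx hy =>
    obtain ⟨k, i, rfl⟩ := hx
    obtain ⟨k', f, rfl⟩ := hy
    exact ⟨k + k', Fin.append i f, aWord_append i f⟩


lemma permEndo_mem (N : Subgroup FreeZ2)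
    (hinv : ∀ σ : Equiv.Perm ℕ, FinitelySupported ⇑σ →
      permEndo ⇑σ '' (N : Set FreeZ2) = (N : Set FreeZ2))
    {σ : Equiv.Perm ℕ} (hfs : FinitelySupported ⇑σ) {x : FreeZ2} (hx : x ∈ N) :
    permEndo ⇑σ x ∈ N := by
  have hm : permEndo ⇑σ x ∈ permEndo ⇑σ '' (N : Set FreeZ2) :=
    Set.mem_image_of_mem _ (SetLike.mem_coe.mpr hx)
  rw [hinv σ hfs] at hm
  exact SetLike.mem_coe.mp hm

end Aux

/-- For every `S_∞`-invariant normal subgroup `N ⊴ ℤ₂^{*∞}`,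
the set of rotations of partitions `ker(i)` with `a_i ∈ N` is a skew category
of partitions whose associated subgroup `F_∞` equals `N`. -/
theorem rotSetOf_isSkewCategory (N : Subgroup FreeZ2) (hnorm : N.Normal)
    (hinv : ∀ σ : Equiv.Perm ℕ, FinitelySupported ⇑σ →
      permEndo ⇑σ '' (N : Set FreeZ2) = (N : Set FreeZ2)) :
    IsSkewCategory (rotSetOf (N : Set FreeZ2)) ∧
      Finfty (rotSetOf (N : Set FreeZ2)) = (N : Set FreeZ2) := by
  constructor
  · constructor
    · -- pair partition
      have e2 : (fun _ : Fin 2 => (1:ℕ)) = Fin.cons 1 (Fin.cons 1 Fin.elim0) := by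
        funext z
        fin_cases z <;> rfl
      have hw : aWord (fun _ : Fin 2 => (1:ℕ)) = 1 := by
        rw [e2, aWord_cons, aWord_cons, aWord_zero, mul_one, gen_sq]
      have h1 : pairPart = kerPart Fin.elim0 (fun _ => (1:ℕ)) := rfl
      rw [h1]
      apply mem_of_word
      rw [aWord_zero, hw]
      simpa using N.one_mem
    · -- identity partition
      have h1 : idPart = kerPart (fun _ : Fin 1 => (1:ℕ)) (fun _ : Fin 1 => (1:ℕ)) := rfl
      rw [h1]
      apply mem_of_word
      simpa using N.one_mem
    · -- involution
      intro k l p hp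
      obtain ⟨i, j, hker, hw⟩ := word_of_mem N hnorm hp
      rw [← hker, invol_ker]
      apply mem_of_word
      have heq : aWord j * (aWord i)⁻¹ = (aWord i * (aWord j)⁻¹)⁻¹ := by group
      rw [heq]
      exact N.inv_mem hw
    · -- connected tensor products
      intro k l k' l' p q i j f g hp hq hkp hkq
      have h1 := word_of_mem_all N hnorm hinv hp i j hkp
      have h2 := word_of_mem_all N hnorm hinv hq f g hkq
      apply mem_of_word
      rw [aWord_append, aWord_append]
      have key : aWord i * aWord f * (aWord j * aWord g)⁻¹
          = (aWord i * (aWord f * (aWord g)⁻¹) * (aWord i)⁻¹) * (aWord i * (aWord j)⁻¹) := by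
        group
      rw [key]
      exact N.mul_mem (hnorm.conj_mem _ h2 _) h1
    · -- conditioned composition
      intro k l l' p q hp hq hcomp
      obtain ⟨i, h, hkp, hw1⟩ := word_of_mem N hnorm hp
      obtain ⟨h2, g, hkq, hw2⟩ := word_of_mem N hnorm hq
      have hker : Setoid.ker h = Setoid.ker h2 := by
        have hc : lowerSetoid p = upperSetoid q := hcomp
        rw [← hkp, ← hkq, lowerSetoid_ker, upperSetoid_ker] at hc
        exact hc
      obtain ⟨σ, hfs, hext, hfresh⟩ := relabel_ext h h2 hker
        (Finset.image i Finset.univ) (Finset.image g Finset.univ)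
      have hσh : ⇑σ ∘ h = h2 := funext hext
      have hkp2 : kerPart (⇑σ ∘ i) h2 = kerPart i h := by
        rw [← hσh]
        show Setoid.ker (Sum.elim (⇑σ ∘ i) (⇑σ ∘ h)) = Setoid.ker (Sum.elim i h)
        have he : Sum.elim (⇑σ ∘ i) (⇑σ ∘ h) = ⇑σ ∘ Sum.elim i h := by
          funext z
          cases z <;> rfl
        rw [he, ker_comp_inj ⇑σ σ.injective]
      have hp2 : kerPart (⇑σ ∘ i) h2 = p := hkp2.trans hkp
      have hw1' : aWord (⇑σ ∘ i) * (aWord h2)⁻¹ ∈ N := by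
        have hm := permEndo_mem N hinv hfs hw1
        rw [map_mul, map_inv, permEndo_aWord, permEndo_aWord, hσh] at hm
        exact hm
      have hsub : ∀ a b, (⇑σ ∘ i) a = g b → ∃ m, h2 m = (⇑σ ∘ i) a := by
        intro a b hab
        by_cases hc : ∃ m, h m = i a
        · obtain ⟨m, hm⟩ := hc
          refine ⟨m, ?_⟩
          rw [← hext m, hm]
          rfl
        · push_neg at hc
          exfalso
          have hfr := hfresh (i a) (Finset.mem_image_of_mem i (Finset.mem_univ a)) hc
          apply hfr
          rw [show σ (i a) = g b from hab]
          exact Finset.mem_image_of_mem g (Finset.mem_univ b)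
      have hcomp2 : compPart p q = kerPart (⇑σ ∘ i) g := by
        rw [← hp2, ← hkq]
        exact compPart_ker (⇑σ ∘ i) h2 g hsub
      rw [hcomp2]
      apply mem_of_word
      have key : aWord (⇑σ ∘ i) * (aWord g)⁻¹
          = (aWord (⇑σ ∘ i) * (aWord h2)⁻¹) * (aWord h2 * (aWord g)⁻¹) := by group
      rw [key]
      exact N.mul_mem hw1' hw2
  · ext x
    constructor
    · rintro ⟨k, i, hmem, rfl⟩
      have hw := word_of_mem_all N hnorm hinv hmem i Fin.elim0 (kerPart_zero i _)
      simpa [aWord_zero] using hw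
    · intro hx
      obtain ⟨k, i, rfl⟩ := exists_aWord x
      exact ⟨k, i, ⟨k, i, hx, Relation.ReflTransGen.refl⟩, rfl⟩


end GTQG
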